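/- If z is a complex number with arg z ∈ (0, π/4), then Im κ₁(z) > 0; if arg z ∈ (−π/4, 0), then Im κ₁(z) < 0. -/

import Mathlib

open Real Complex

/-- Analytic extension of the degree-1 arc-cosine kernel to the slit plane,
using principal branches of `log` and the square root (`cpow`). -/
noncomputable def K1C (z : ℂ) : ℂ :=
  (z * ((Real.pi : ℂ) + Complex.I * Complex.log (z + Complex.I * ((1 - z ^ 2) ^ ((1 : ℂ) / 2))))
    + (1 - z ^ 2) ^ ((1 : ℂ) / 2)) / (Real.pi : ℂ)

lemma sinh_lt_mul_cosh {t : ℝ} (ht : 0 < t) : Real.sinh t < t * Real.cosh t := by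
  have key : StrictMonoOn (fun x : ℝ => x * Real.cosh x - Real.sinh x) (Set.Ici 0) := by
    apply strictMonoOn_of_deriv_pos (convex_Ici 0)
    · exact ((continuous_id.mul Real.continuous_cosh).sub Real.continuous_sinh).continuousOn
    · intro x hx
      rw [interior_Ici, Set.mem_Ioi] at hx
      have hd : HasDerivAt (fun x : ℝ => x * Real.cosh x - Real.sinh x) (x * Real.sinh x) x := by
        have h := ((hasDerivAt_id x).mul (Real.hasDerivAt_cosh x)).sub (Real.hasDerivAt_sinh x)
        replace h : HasDerivAt (fun x : ℝ => x * Real.cosh x - Real.sinh x)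
            (1 * Real.cosh x + id x * Real.sinh x - Real.cosh x) x := h
        convert h using 1
        simp only [id_eq]
        ring
      rw [hd.deriv]
      exact mul_pos hx (Real.sinh_pos_iff.mpr hx)
  have h0 := key Set.self_mem_Ici (Set.mem_Ici.mpr ht.le) ht
  simpa using h0

lemma aux_pos {t u : ℝ} (hc : 0 < Real.cos u) (hs : 0 < Real.sin u) (hu : u < π) (ht : 0 < t) :
    0 < Real.cos u * Real.cosh t * t + Real.sin u * Real.sinh t * (π - u)
      + -(Real.cos u * Real.sinh t) := by
  have h1 := sinh_lt_mul_cosh ht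
  have hsh : 0 < Real.sinh t := Real.sinh_pos_iff.mpr ht
  nlinarith [mul_pos hc (sub_pos.mpr h1), mul_pos (sub_pos.mpr hu) (mul_pos hs hsh)]

lemma aux_neg {t u : ℝ} (hc : 0 < Real.cos u) (hs : 0 < Real.sin u) (hu : u < π) (ht : t < 0) :
    Real.cos u * Real.cosh t * t + Real.sin u * Real.sinh t * (π - u)
      + -(Real.cos u * Real.sinh t) < 0 := by
  have h1 := sinh_lt_mul_cosh (neg_pos.mpr ht)
  rw [Real.sinh_neg, Real.cosh_neg] at h1
  have hsh : Real.sinh t < 0 := Real.sinh_neg_iff.mpr ht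
  nlinarith [mul_pos hc (by linarith : 0 < Real.sinh t - t * Real.cosh t),
    mul_pos (sub_pos.mpr hu) (mul_pos hs (neg_pos.mpr hsh))]

lemma K1C_im_sign (z : ℂ) (ha : 0 < z.re) (hb : z.im ≠ 0) :
    (0 < z.im → 0 < (K1C z).im) ∧ (z.im < 0 → (K1C z).im < 0) := by
  have hw_im : (1 - z ^ 2).im = -(2 * z.re * z.im) := by
    simp [Complex.sub_im, Complex.mul_im, sq]
    ring
  have hwne : (1 - z ^ 2) ≠ 0 := by
    intro h
    rw [h] at hw_im
    simp at hw_im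
    rcases hw_im with h' | h'
    · exact absurd h' ha.ne'
    · exact hb h'
  set s : ℂ := (1 - z ^ 2) ^ ((1 : ℂ) / 2) with hs_def
  have hs_sq : s ^ 2 = 1 - z ^ 2 := by
    rw [hs_def]
    have h2 : ((1 : ℂ) / 2) = (((2 : ℕ) : ℂ))⁻¹ := by norm_num
    rw [h2]
    exact Complex.cpow_nat_inv_pow _ two_ne_zero
  -- components of s
  set θ : ℝ := (1 - z ^ 2).arg with hθ_def
  have hθ_lt_pi : θ < π := by
    rcases lt_or_eq_of_le (Complex.arg_le_pi (1 - z ^ 2)) with h | h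
    · exact h
    · exfalso
      rw [Complex.arg_eq_pi_iff] at h
      rw [h.2] at hw_im
      rcases mul_eq_zero.mp (by linarith : 2 * z.re * z.im = 0) with h' | h'
      · rcases mul_eq_zero.mp h' with h'' | h''
        · norm_num at h''
        · exact absurd h'' ha.ne'
      · exact hb h'
  have hθ_gt : -π < θ := Complex.neg_pi_lt_arg _
  have hcosθ : 0 < Real.cos (θ / 2) :=
    Real.cos_pos_of_mem_Ioo ⟨by linarith, by linarith⟩
  set A : ℝ := Real.exp ((Complex.log (1 - z ^ 2)).re / 2) with hA_def
  have hA_pos : 0 < A := Real.exp_pos _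
  have hsc : s = Complex.exp (Complex.log (1 - z ^ 2) * ((1 : ℂ) / 2)) := by
    rw [hs_def, Complex.cpow_def_of_ne_zero hwne]
  have harg_im : (Complex.log (1 - z ^ 2) * ((1 : ℂ) / 2)).im = θ / 2 := by
    simp [Complex.mul_im, Complex.log_im, hθ_def]
    ring
  have harg_re : (Complex.log (1 - z ^ 2) * ((1 : ℂ) / 2)).re = (Complex.log (1 - z ^ 2)).re / 2 := by
    simp [Complex.mul_re, Complex.log_im]
    ring
  have hs_re : s.re = A * Real.cos (θ / 2) := by
    rw [hsc, Complex.exp_re, harg_im, harg_re, hA_def]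
  have hs_im : s.im = A * Real.sin (θ / 2) := by
    rw [hsc, Complex.exp_im, harg_im, harg_re, hA_def]
  have hs_re_pos : 0 < s.re := by
    rw [hs_re]; exact mul_pos hA_pos hcosθ
  -- the point ζ
  set ζ : ℂ := z + Complex.I * s with hζ_def
  have hζ_mul : ζ * (z - Complex.I * s) = 1 := by
    rw [hζ_def]
    linear_combination hs_sq - s ^ 2 * Complex.I_sq
  have hζ_ne : ζ ≠ 0 := left_ne_zero_of_mul_eq_one hζ_mul
  have hζ_inv : ζ⁻¹ = z - Complex.I * s := inv_eq_of_mul_eq_one_right hζ_mul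
  have hζ_re : ζ.re = z.re - s.im := by
    rw [hζ_def]; simp; try ring
  have hζ_im : ζ.im = z.im + s.re := by
    rw [hζ_def]; simp; try ring
  have hinv_re : (ζ⁻¹).re = z.re + s.im := by
    rw [hζ_inv]; simp; try ring
  have hinv_im : (ζ⁻¹).im = z.im - s.re := by
    rw [hζ_inv]; simp; try ring
  have hns_pos : 0 < Complex.normSq ζ := Complex.normSq_pos.mpr hζ_ne
  -- positivity of ζ components
  have hζ_re_pos : 0 < ζ.re ∧ 0 < ζ.im := by
    rcases lt_or_gt_of_ne hb with hbneg | hbpos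
    · -- z.im < 0 : (1 - z^2).im > 0, so 0 < θ, so s.im > 0
      have hwim_pos : 0 < (1 - z ^ 2).im := by rw [hw_im]; nlinarith
      have hθ_pos : 0 < θ := by
        rcases lt_or_ge 0 θ with h | h
        · exact h
        · exfalso
          have : θ < 0 ∨ θ = 0 := lt_or_eq_of_le h
          rcases this with h' | h'
          · have := Complex.arg_neg_iff.mp h'
            linarith
          · have hsin := Complex.norm_mul_sin_arg (1 - z ^ 2)
            rw [← hθ_def, h', Real.sin_zero, mul_zero] at hsin
            linarith
      have hs_im_pos : 0 < s.im := by
        rw [hs_im]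
        exact mul_pos hA_pos (Real.sin_pos_of_pos_of_lt_pi (by linarith) (by linarith))
      -- use ζ⁻¹
      have h1 : 0 < (ζ⁻¹).re := by rw [hinv_re]; linarith
      have h2 : (ζ⁻¹).im < 0 := by rw [hinv_im]; linarith
      rw [Complex.inv_re] at h1
      rw [Complex.inv_im] at h2
      constructor
      · by_contra h
        push_neg at h
        have : ζ.re / Complex.normSq ζ ≤ 0 := div_nonpos_of_nonpos_of_nonneg h hns_pos.le
        linarith
      · by_contra h
        push_neg at h
        have : 0 ≤ -ζ.im / Complex.normSq ζ := div_nonneg (by linarith) hns_pos.le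
        linarith
    · -- 0 < z.im : (1 - z^2).im < 0, so θ < 0, s.im < 0
      have hwim_neg : (1 - z ^ 2).im < 0 := by rw [hw_im]; nlinarith
      have hθ_neg : θ < 0 := Complex.arg_neg_iff.mpr hwim_neg
      have hs_im_neg : s.im < 0 := by
        rw [hs_im]
        have : Real.sin (θ / 2) < 0 :=
          Real.sin_neg_of_neg_of_neg_pi_lt (by linarith) (by linarith)
        nlinarith
      constructor
      · rw [hζ_re]; linarith
      · rw [hζ_im]; linarith
  obtain ⟨hre_pos, him_pos⟩ := hζ_re_pos
  -- polar data
  set t : ℝ := Real.log (‖ζ‖) with ht_def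
  set u : ℝ := ζ.arg with hu_def
  have habs_pos : 0 < ‖ζ‖ := norm_pos_iff.mpr hζ_ne
  have hexp_t : Real.exp t = ‖ζ‖ := Real.exp_log habs_pos
  have hcu : Real.exp t * Real.cos u = ζ.re := by
    rw [hexp_t, hu_def]; exact Complex.norm_mul_cos_arg ζ
  have hsu : Real.exp t * Real.sin u = ζ.im := by
    rw [hexp_t, hu_def]; exact Complex.norm_mul_sin_arg ζ
  have hcos_pos : 0 < Real.cos u := by
    by_contra hcs
    push_neg at hcs
    have h : Real.exp t * Real.cos u ≤ 0 :=
      mul_nonpos_of_nonneg_of_nonpos (Real.exp_pos t).le hcs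
    rw [hcu] at h
    linarith
  have hsin_pos : 0 < Real.sin u := by
    by_contra hcs
    push_neg at hcs
    have h : Real.exp t * Real.sin u ≤ 0 :=
      mul_nonpos_of_nonneg_of_nonpos (Real.exp_pos t).le hcs
    rw [hsu] at h
    linarith
  have hu_lt_pi : u < π := by
    rcases lt_or_eq_of_le (Complex.arg_le_pi ζ) with h | h
    · exact hu_def.trans_lt h
    · exfalso
      have h2 : u = π := hu_def.trans h
      rw [h2, Real.sin_pi] at hsin_pos
      exact lt_irrefl _ hsin_pos
  have hns_eq : Complex.normSq ζ = Real.exp t * Real.exp t := by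
    rw [hexp_t, ← Complex.sq_norm]; ring
  -- the four component equations
  have E1 : z.re - s.im = Real.exp t * Real.cos u := by rw [← hζ_re]; exact hcu.symm
  have E2 : z.im + s.re = Real.exp t * Real.sin u := by rw [← hζ_im]; exact hsu.symm
  have E3 : z.re + s.im = Real.exp (-t) * Real.cos u := by
    have h := Complex.inv_re ζ
    rw [hinv_re, ← hcu, hns_eq] at h
    rw [h, Real.exp_neg]
    have hne := (Real.exp_pos t).ne'
    field_simp
  have E4 : z.im - s.re = -(Real.exp (-t) * Real.sin u) := by
    have h := Complex.inv_im ζ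
    rw [hinv_im, ← hsu, hns_eq] at h
    rw [h, Real.exp_neg]
    have hne := (Real.exp_pos t).ne'
    field_simp
  have hz_re_eq : z.re = Real.cos u * Real.cosh t := by
    rw [Real.cosh_eq]; linarith [E1, E3]
  have hz_im_eq : z.im = Real.sin u * Real.sinh t := by
    rw [Real.sinh_eq]; linarith [E2, E4]
  have hs_im_eq : s.im = -(Real.cos u * Real.sinh t) := by
    rw [Real.sinh_eq]; linarith [E1, E3]
  -- the imaginary part of K1C
  have hK : (K1C z).im = (z.re * t + z.im * (π - u) + s.im) / π := by
    rw [K1C, ← hs_def, ← hζ_def]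
    rw [Complex.div_ofReal_im]
    simp [Complex.add_im, Complex.mul_im, Complex.mul_re, Complex.log_re, Complex.log_im,
      ← ht_def, ← hu_def]
    ring
    simp
  constructor
  · intro hbpos
    rw [hz_im_eq] at hbpos
    have ht_pos : 0 < t := by
      rcases mul_pos_iff.mp hbpos with ⟨_, h⟩ | ⟨h, _⟩
      · exact Real.sinh_pos_iff.mp h
      · exact absurd h (not_lt.mpr hsin_pos.le)
    rw [hK, hz_re_eq, hz_im_eq, hs_im_eq]
    exact div_pos (aux_pos hcos_pos hsin_pos hu_lt_pi ht_pos) Real.pi_pos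
  · intro hbneg
    rw [hz_im_eq] at hbneg
    have ht_neg : t < 0 := by
      rcases mul_neg_iff.mp hbneg with ⟨_, h⟩ | ⟨h, _⟩
      · exact Real.sinh_neg_iff.mp h
      · exact absurd h (not_lt.mpr hsin_pos.le)
    rw [hK, hz_re_eq, hz_im_eq, hs_im_eq]
    exact div_neg_of_neg_of_pos (aux_neg hcos_pos hsin_pos hu_lt_pi ht_neg) Real.pi_pos

theorem k1_half_plane_signs (z : ℂ) :
    (Complex.arg z ∈ Set.Ioo 0 (Real.pi / 4) → 0 < (K1C z).im) ∧
    (Complex.arg z ∈ Set.Ioo (-(Real.pi / 4)) 0 → (K1C z).im < 0) := by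
  constructor
  · rintro ⟨h1, h2⟩
    have hz0 : z ≠ 0 := by
      intro h0; rw [h0, Complex.arg_zero] at h1; exact lt_irrefl _ h1
    have habs : 0 < ‖z‖ := norm_pos_iff.mpr hz0
    have him : 0 < z.im := by
      rw [← Complex.norm_mul_sin_arg z]
      exact mul_pos habs (Real.sin_pos_of_pos_of_lt_pi h1 (by linarith [Real.pi_pos]))
    have hre : 0 < z.re := by
      rw [← Complex.norm_mul_cos_arg z]
      exact mul_pos habs (Real.cos_pos_of_mem_Ioo ⟨by linarith [Real.pi_pos], by linarith [Real.pi_pos]⟩)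
    exact (K1C_im_sign z hre him.ne').1 him
  · rintro ⟨h1, h2⟩
    have hz0 : z ≠ 0 := by
      intro h0; rw [h0, Complex.arg_zero] at h2; exact lt_irrefl _ h2
    have habs : 0 < ‖z‖ := norm_pos_iff.mpr hz0
    have him : z.im < 0 := by
      rw [← Complex.norm_mul_sin_arg z]
      have : Real.sin (Complex.arg z) < 0 :=
        Real.sin_neg_of_neg_of_neg_pi_lt h2 (by linarith [Real.pi_pos])
      exact mul_neg_of_pos_of_neg habs this
    have hre : 0 < z.re := by
      rw [← Complex.norm_mul_cos_arg z]
      exact mul_pos habs (Real.cos_pos_of_mem_Ioo ⟨by linarith [Real.pi_pos], by linarith [Real.pi_pos]⟩)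
    exact (K1C_im_sign z hre him.ne).2 him
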